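/- (Belief bounded by fiducial probability.) Assume Θ_x(u) ≠ ∅ for all x, u, and let S be a valid predictive random set. Then for every x and every A ⊆ Θ: bel_x(A; S) ≤ bel_x(A; S₀), where S₀ = {U} is the singleton predictive random set with U ~ P_U, i.e. bel_x(A; S₀) = P_U(Θ_x(U) ⊆ A) is the fiducial probability of A. -/

import Mathlib

open MeasureTheory Set

/-- Proposition 1 (belief bounded by fiducial probability): if `Θ_x(u) ≠ ∅` for all
`x, u` and `S` is a valid predictive random set, then for every `x` and every `A`,
`bel_x(A;S) = P(Θ_x(S) ⊆ A) ≤ μ{u : Θ_x(u) ⊆ A} = bel_x(A;S₀)`, the fiducial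
probability of `A`. -/
theorem belief_le_fiducial {U 𝒳 Θ Ω : Type*} [MeasurableSpace U] [MeasurableSpace Ω]
    (μ : Measure U) [IsProbabilityMeasure μ]
    (P : Measure Ω) [IsProbabilityMeasure P]
    (a : Θ → U → 𝒳) (S : Ω → Set U)
    (hvalid : ∀ α ∈ Set.Ioo (0:ℝ) 1,
      μ {u | ENNReal.ofReal (1 - α) ≤ P {ω | u ∉ S ω}} ≤ ENNReal.ofReal α)
    (hne : ∀ (x : 𝒳) (u : U), {θ' : Θ | x = a θ' u}.Nonempty)
    (x : 𝒳) (A : Set Θ) :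
    P {ω | (⋃ u ∈ S ω, {θ' : Θ | x = a θ' u}) ⊆ A}
      ≤ μ {u | {θ' : Θ | x = a θ' u} ⊆ A} := by
  set Ux : Set U := {u | {θ' : Θ | x = a θ' u} ⊆ A} with hUx
  set b : ENNReal := P {ω | (⋃ u ∈ S ω, {θ' : Θ | x = a θ' u}) ⊆ A} with hb
  -- rewrite the event as `S ω ⊆ Ux`
  have hev : {ω | (⋃ u ∈ S ω, {θ' : Θ | x = a θ' u}) ⊆ A} = {ω | S ω ⊆ Ux} := by
    ext ω
    simp only [mem_setOf_eq, iUnion₂_subset_iff]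
    rfl
  rcases eq_or_ne b 0 with hb0 | hb0
  · rw [hb0]; exact zero_le
  have hble1 : b ≤ 1 := prob_le_one
  have hbne : b ≠ ⊤ := (lt_of_le_of_lt hble1 ENNReal.one_lt_top).ne
  set b' : ℝ := b.toReal with hb'
  have hb'pos : 0 < b' := ENNReal.toReal_pos hb0 hbne
  have hb'le1 : b' ≤ 1 := by
    have := ENNReal.toReal_mono ENNReal.one_ne_top hble1
    simpa using this
  have hbeq : b = ENNReal.ofReal b' := (ENNReal.ofReal_toReal hbne).symm
  -- key: for u ∉ Ux, b ≤ P {ω | u ∉ S ω}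
  have hkey : ∀ u ∉ Ux, b ≤ P {ω | u ∉ S ω} := by
    intro u hu
    rw [hb, hev]
    apply measure_mono
    intro ω hω
    exact fun hus => hu (hω hus)
  -- for every ε ∈ (0, b'), μ Uxᶜ ≤ ofReal (1 - b' + ε)
  have hcompl : ∀ ε : ℝ, 0 < ε → ε < b' → μ Uxᶜ ≤ ENNReal.ofReal (1 - b' + ε) := by
    intro ε hε hεb
    have hα : (1 - b' + ε) ∈ Set.Ioo (0:ℝ) 1 := by
      constructor <;> linarith
    refine le_trans (measure_mono ?_) (hvalid _ hα)
    intro u hu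
    have : ENNReal.ofReal (1 - (1 - b' + ε)) ≤ b := by
      rw [hbeq]
      exact ENNReal.ofReal_le_ofReal (by linarith)
    exact this.trans (hkey u hu)
  have hcompl' : μ Uxᶜ ≤ ENNReal.ofReal (1 - b') := by
    refine ENNReal.le_of_forall_pos_le_add fun ε hε hlt => ?_
    rcases lt_or_ge (ε : ℝ) b' with h | h
    · refine (hcompl ε hε h).trans ?_
      calc ENNReal.ofReal (1 - b' + ε) ≤ ENNReal.ofReal (1 - b') + ENNReal.ofReal ε :=
            ENNReal.ofReal_add_le
        _ = ENNReal.ofReal (1 - b') + ε := by rw [ENNReal.ofReal_coe_nnreal]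
    · -- then 1 - b' + ε ≥ 1, and μ Uxᶜ ≤ 1 ≤ ofReal(1-b') + ε ... need care
      have h1 : μ Uxᶜ ≤ 1 := prob_le_one
      refine h1.trans ?_
      calc (1 : ENNReal) = ENNReal.ofReal ((1 - b') + b') := by norm_num
        _ ≤ ENNReal.ofReal (1 - b') + ENNReal.ofReal b' := ENNReal.ofReal_add_le
        _ ≤ ENNReal.ofReal (1 - b') + ε := by
            gcongr
            rw [← ENNReal.ofReal_coe_nnreal]
            exact ENNReal.ofReal_le_ofReal h
  -- conclude: b + μ Uxᶜ ≤ 1 ≤ μ Ux + μ Uxᶜ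
  have hsum : b + μ Uxᶜ ≤ μ Ux + μ Uxᶜ := by
    have h1 : b + μ Uxᶜ ≤ 1 := by
      rw [hbeq]
      calc ENNReal.ofReal b' + μ Uxᶜ ≤ ENNReal.ofReal b' + ENNReal.ofReal (1 - b') := by
            gcongr
        _ = ENNReal.ofReal (b' + (1 - b')) := (ENNReal.ofReal_add hb'pos.le (by linarith)).symm
        _ = 1 := by norm_num
    have h2 : (1 : ENNReal) ≤ μ Ux + μ Uxᶜ := by
      have := measure_union_le (μ := μ) Ux Uxᶜ
      rwa [union_compl_self, measure_univ] at this
    exact h1.trans h2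
  have hfin : μ Uxᶜ ≠ ⊤ := (measure_lt_top μ _).ne
  exact (ENNReal.add_le_add_iff_right hfin).mp hsum
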